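/- Let W₁, W₂, W₃ be vector spaces over ℂ with linear operators L₀⁽¹⁾ on W₁, L₀⁽²⁾ on W₂, L₀⁽³⁾ on W₃ and L₋₁ on W₁, and let μ_{n;k} : W₁ × W₂ → W₃ (n, k ∈ ℂ) be a family of bilinear maps satisfying the L(−1)-derivative property and the L(0)-bracket relation. For fixed w₁ ∈ W₁, w₂ ∈ W₂, a, b ∈ ℂ and i, j ∈ ℕ, let G^{(i,j)} : ℂ × ℂ → W₃ be the family G^{(i,j)}(n,k) = μ_{n;k}((L₀⁽¹⁾ − a)^i w₁, (L₀⁽²⁾ − b)^j w₂), and let 𝔖 act on W₃-valued families by (𝔖G)(n,k) = (−n−1)·G(n,k) + (k+1)·G(n,k+1) (the coefficient form of x·d/dx on Σ G(n,k) x^{−n−1}(log x)^k). Then for all a, b, c ∈ ℂ, t ∈ ℕ, and all n, k ∈ ℂ: (L₀⁽³⁾ − c)^t (μ_{n;k}(w₁, w₂)) = Σ_{i,j,l ∈ ℕ, i+j+l=t} (t!/(i!·j!·l!)) · ((𝔖 − c + a + b)^l G^{(i,j)})(n,k). -/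

import Mathlib

set_option maxHeartbeats 1000000
set_option linter.unusedSectionVars false
set_option linter.unusedVariables false

open Finset

section Aux
variable {W₁ W₂ W₃ : Type*} [AddCommGroup W₁] [Module ℂ W₁]
  [AddCommGroup W₂] [Module ℂ W₂] [AddCommGroup W₃] [Module ℂ W₃]

/-- The operator `x d/dx + d` on coefficient families. -/
def Sop (d : ℂ) : ((ℂ × ℂ) → W₃) →ₗ[ℂ] ((ℂ × ℂ) → W₃) where
  toFun G := fun r => (-r.1 - 1) • G r + (r.2 + 1) • G (r.1, r.2 + 1) + d • G r
  map_add' G H := by funext r; simp only [Pi.add_apply, smul_add]; abel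
  map_smul' s G := by
    funext r
    simp only [Pi.smul_apply, RingHom.id_apply, smul_add, smul_comm s]

abbrev Fam (W₁ W₂ W₃ : Type*) : Type _ := W₁ → W₂ → (ℂ × ℂ) → W₃

def Xop (A : W₁ → W₁) : Fam W₁ W₂ W₃ →ₗ[ℂ] Fam W₁ W₂ W₃ where
  toFun Ψ := fun u v => Ψ (A u) v
  map_add' _ _ := rfl
  map_smul' _ _ := rfl

def Yop (B : W₂ → W₂) : Fam W₁ W₂ W₃ →ₗ[ℂ] Fam W₁ W₂ W₃ where
  toFun Ψ := fun u v => Ψ u (B v)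
  map_add' _ _ := rfl
  map_smul' _ _ := rfl

def Zop (d : ℂ) : Fam W₁ W₂ W₃ →ₗ[ℂ] Fam W₁ W₂ W₃ where
  toFun Ψ := fun u v => Sop d (Ψ u v)
  map_add' Ψ Θ := by funext u v; exact map_add _ _ _
  map_smul' s Ψ := by funext u v; exact (Sop d).map_smul s (Ψ u v)

def Cop (C : W₃ →ₗ[ℂ] W₃) : Fam W₁ W₂ W₃ →ₗ[ℂ] Fam W₁ W₂ W₃ where
  toFun Ψ := fun u v r => C (Ψ u v r)
  map_add' Ψ Θ := by funext u v r; simp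
  map_smul' s Ψ := by funext u v r; simp

lemma commute_CX (C : W₃ →ₗ[ℂ] W₃) (A : W₁ → W₁) :
    Commute (Cop (W₁ := W₁) (W₂ := W₂) C) (Xop A) := LinearMap.ext fun Ψ => rfl

lemma commute_CY (C : W₃ →ₗ[ℂ] W₃) (B : W₂ → W₂) :
    Commute (Cop (W₁ := W₁) (W₂ := W₂) C) (Yop B) := LinearMap.ext fun Ψ => rfl

lemma commute_CZ (C : W₃ →ₗ[ℂ] W₃) (d : ℂ) :
    Commute (Cop (W₁ := W₁) (W₂ := W₂) C) (Zop d) := by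
  apply LinearMap.ext; intro Ψ
  show (Cop C) ((Zop d) Ψ) = (Zop d) ((Cop C) Ψ)
  funext u v r
  simp [Cop, Zop, Sop, map_add, map_smul]

lemma commute_XY (A : W₁ → W₁) (B : W₂ → W₂) :
    Commute (Xop (W₂ := W₂) (W₃ := W₃) A) (Yop B) := LinearMap.ext fun Ψ => rfl

lemma commute_XZ (A : W₁ → W₁) (d : ℂ) :
    Commute (Xop (W₂ := W₂) (W₃ := W₃) A) (Zop d) := LinearMap.ext fun Ψ => rfl

lemma commute_YZ (B : W₂ → W₂) (d : ℂ) :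
    Commute (Yop (W₁ := W₁) (W₃ := W₃) B) (Zop d) := LinearMap.ext fun Ψ => rfl

lemma Xop_pow (A : W₁ → W₁) (i : ℕ) (Ψ : Fam W₁ W₂ W₃) :
    ((Xop A) ^ i) Ψ = fun u v => Ψ (A^[i] u) v := by
  induction i with
  | zero => simp
  | succ i ih =>
    rw [pow_succ', Module.End.mul_apply]
    show (Xop A) (((Xop A) ^ i) Ψ) = _
    rw [ih]
    funext u v
    simp [Xop, Function.iterate_succ_apply]

lemma Yop_pow (B : W₂ → W₂) (j : ℕ) (Ψ : Fam W₁ W₂ W₃) :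
    ((Yop B) ^ j) Ψ = fun u v => Ψ u (B^[j] v) := by
  induction j with
  | zero => simp
  | succ j ih =>
    rw [pow_succ', Module.End.mul_apply]
    show (Yop B) (((Yop B) ^ j) Ψ) = _
    rw [ih]
    funext u v
    simp [Yop, Function.iterate_succ_apply]

lemma Zop_pow (d : ℂ) (l : ℕ) (Ψ : Fam W₁ W₂ W₃) :
    ((Zop d) ^ l) Ψ = fun u v => ((Sop d)^[l]) (Ψ u v) := by
  induction l with
  | zero => simp
  | succ l ih =>
    rw [pow_succ', Module.End.mul_apply]
    show (Zop d) (((Zop d) ^ l) Ψ) = _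
    rw [ih]
    funext u v
    simp [Zop, Function.iterate_succ_apply']

lemma Cop_pow (C : W₃ →ₗ[ℂ] W₃) (t : ℕ) (Ψ : Fam W₁ W₂ W₃) (u : W₁) (v : W₂) (r : ℂ × ℂ) :
    (((Cop (W₁ := W₁) (W₂ := W₂) C) ^ t) Ψ) u v r = (C ^ t) (Ψ u v r) := by
  induction t with
  | zero => simp
  | succ t ih =>
    rw [pow_succ', Module.End.mul_apply, pow_succ', Module.End.mul_apply]
    show C ((((Cop C) ^ t) Ψ) u v r) = _
    rw [ih]

end Aux



/-- Formula (3.33) of Lemma 3.22: for a family of bilinear maps `μ n k : W₁ × W₂ → W₃`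
(the coefficients of a formal series `𝒴(w₁,x)w₂ = Σ μ_{n;k}(w₁,w₂) x^{−n−1} (log x)^k`)
satisfying the L(−1)-derivative property and the L(0)-bracket relation,
`(L(0) − c)^t 𝒴(w₁,x)w₂ = Σ_{i+j+l=t} (t!/(i!j!l!)) (x d/dx − c + a + b)^l
  𝒴((L(0)−a)^i w₁, x) (L(0)−b)^j w₂`, coefficientwise. -/
theorem stmt8 {W₁ W₂ W₃ : Type*} [AddCommGroup W₁] [Module ℂ W₁]
    [AddCommGroup W₂] [Module ℂ W₂] [AddCommGroup W₃] [Module ℂ W₃]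
    (L01 : Module.End ℂ W₁) (L02 : Module.End ℂ W₂) (L03 : Module.End ℂ W₃)
    (Lm1 : Module.End ℂ W₁)
    (μ : ℂ → ℂ → W₁ →ₗ[ℂ] W₂ →ₗ[ℂ] W₃)
    (hderiv : ∀ (n k : ℂ) (w₁ : W₁) (w₂ : W₂),
      μ n k (Lm1 w₁) w₂ = (-n) • μ (n - 1) k w₁ w₂ + (k + 1) • μ (n - 1) (k + 1) w₁ w₂)
    (hbr : ∀ (n k : ℂ) (w₁ : W₁) (w₂ : W₂),
      L03 (μ n k w₁ w₂) - μ n k w₁ (L02 w₂)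
        = μ n k (L01 w₁) w₂ + μ (n + 1) k (Lm1 w₁) w₂)
    (w₁ : W₁) (w₂ : W₂) (a b c : ℂ) (t : ℕ) (n k : ℂ) :
    ((L03 - c • 1) ^ t) (μ n k w₁ w₂)
      = ∑ p ∈ Finset.HasAntidiagonal.antidiagonal t, ∑ q ∈ Finset.HasAntidiagonal.antidiagonal p.2,
          ((t.factorial : ℂ) /
              ((p.1.factorial : ℂ) * (q.1.factorial : ℂ) * (q.2.factorial : ℂ))) •
            ((fun (G : ℂ × ℂ → W₃) => fun r : ℂ × ℂ =>
                  (-r.1 - 1) • G r + (r.2 + 1) • G (r.1, r.2 + 1) + (a + b - c) • G r)^[q.2]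
                (fun r : ℂ × ℂ =>
                  μ r.1 r.2 (((L01 - a • 1) ^ p.1) w₁) (((L02 - b • 1) ^ q.1) w₂)))
              (n, k) := by
  classical
  set d : ℂ := a + b - c with hd
  set A : Module.End ℂ W₁ := L01 - a • 1 with hA
  set B : Module.End ℂ W₂ := L02 - b • 1 with hB
  set C3 : Module.End ℂ W₃ := L03 - c • 1 with hC3
  set Φ : Fam W₁ W₂ W₃ := fun u v r => μ r.1 r.2 u v with hΦ
  set X : Fam W₁ W₂ W₃ →ₗ[ℂ] Fam W₁ W₂ W₃ := Xop (⇑A) with hX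
  set Y : Fam W₁ W₂ W₃ →ₗ[ℂ] Fam W₁ W₂ W₃ := Yop (⇑B) with hY
  set Z : Fam W₁ W₂ W₃ →ₗ[ℂ] Fam W₁ W₂ W₃ := Zop d with hZ
  -- the single-step key identity
  have key0 : (Cop C3) Φ = (X + (Y + Z)) Φ := by
    funext u v r
    obtain ⟨n', k'⟩ := r
    have h1 := hbr n' k' u v
    have h2 := hderiv (n' + 1) k' u v
    simp only [add_sub_cancel_right] at h2
    have h3 : L03 (μ n' k' u v)
        = μ n' k' (L01 u) v + μ n' k' u (L02 v)
          + ((-(n' + 1)) • μ n' k' u v + (k' + 1) • μ n' (k' + 1) u v) := by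
      have h1' : L03 (μ n' k' u v)
          = μ n' k' (L01 u) v + μ (n' + 1) k' (Lm1 u) v + μ n' k' u (L02 v) := by
        rw [← h1]; abel
      rw [h1', h2]; abel
    show C3 (μ n' k' u v)
        = Φ (A u) v (n', k') + (Φ u (B v) (n', k') + Sop d (Φ u v) (n', k'))
    simp only [hΦ, hA, hB, hC3, hd, Sop, LinearMap.coe_mk, AddHom.coe_mk,
      LinearMap.sub_apply, LinearMap.smul_apply, Module.End.one_apply,
      map_sub, map_smul, LinearMap.map_sub, LinearMap.map_smul, h3]
    module
  have hXYZc : Commute (Cop C3) (X + (Y + Z)) :=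
    (commute_CX C3 ⇑A).add_right ((commute_CY C3 ⇑B).add_right (commute_CZ C3 d))
  have hX_YZ : Commute X (Y + Z) :=
    (commute_XY ⇑A ⇑B).add_right (commute_XZ ⇑A d)
  have hYZ : Commute Y Z := commute_YZ ⇑B d
  have main1 : ∀ s : ℕ, ((Cop C3) ^ s) Φ = ((X + (Y + Z)) ^ s) Φ := by
    intro s
    induction s with
    | zero => simp
    | succ s ih =>
      rw [pow_succ, Module.End.mul_apply, key0, ← Module.End.mul_apply,
        (hXYZc.pow_left s).eq, Module.End.mul_apply, ih, ← Module.End.mul_apply, ← pow_succ']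
  have main : (C3 ^ t) (μ n k w₁ w₂) = (((X + (Y + Z)) ^ t) Φ) w₁ w₂ (n, k) := by
    rw [← main1 t, Cop_pow]
  rw [main, hX_YZ.add_pow', LinearMap.sum_apply, Finset.sum_apply, Finset.sum_apply,
    Finset.sum_apply]
  refine Finset.sum_congr rfl fun p hp => ?_
  have hpsum : p.1 + p.2 = t := (Finset.HasAntidiagonal.mem_antidiagonal.mp hp)
  -- expand the inner power
  have inner : (X ^ p.1 * (Y + Z) ^ p.2) Φ
      = ∑ q ∈ antidiagonal p.2, (p.2.choose q.1) • ((X ^ p.1) ((Y ^ q.1) ((Z ^ q.2) Φ))) := by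
    rw [Module.End.mul_apply, hYZ.add_pow', LinearMap.sum_apply, map_sum]
    refine Finset.sum_congr rfl fun q hq => ?_
    rw [LinearMap.smul_apply, map_nsmul, Module.End.mul_apply]
  have comp : ∀ i j l : ℕ, (X ^ i) ((Y ^ j) ((Z ^ l) Φ))
      = fun u v => (⇑(Sop (W₃ := W₃) d))^[l] (Φ (A^[i] u) (B^[j] v)) := by
    intro i j l
    rw [hZ, hY, hX, Zop_pow, Yop_pow, Xop_pow]
  rw [LinearMap.smul_apply, inner]
  simp only [comp]
  rw [Finset.smul_sum]
  simp only [Finset.sum_apply, Pi.smul_apply]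
  refine Finset.sum_congr rfl fun q hq => ?_
  have hqsum : q.1 + q.2 = p.2 := (Finset.HasAntidiagonal.mem_antidiagonal.mp hq)
  have hcoef : ((t.factorial : ℂ) /
      ((p.1.factorial : ℂ) * (q.1.factorial : ℂ) * (q.2.factorial : ℂ)))
      = ((t.choose p.1 * p.2.choose q.1 : ℕ) : ℂ) := by
    have e1 : t.choose p.1 * p.1.factorial * p.2.factorial = t.factorial := by
      have := Nat.choose_mul_factorial_mul_factorial
        (show p.1 ≤ t by omega)
      rwa [show t - p.1 = p.2 by omega] at this
    have e2 : p.2.choose q.1 * q.1.factorial * q.2.factorial = p.2.factorial := by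
      have := Nat.choose_mul_factorial_mul_factorial
        (show q.1 ≤ p.2 by omega)
      rwa [show p.2 - q.1 = q.2 by omega] at this
    rw [div_eq_iff (mul_ne_zero (mul_ne_zero (Nat.cast_ne_zero.mpr p.1.factorial_ne_zero)
      (Nat.cast_ne_zero.mpr q.1.factorial_ne_zero)) (Nat.cast_ne_zero.mpr q.2.factorial_ne_zero))]
    push_cast [← e1, ← e2]
    ring
  rw [hcoef]
  have hlam : (fun (G : ℂ × ℂ → W₃) => fun r : ℂ × ℂ =>
      (-r.1 - 1) • G r + (r.2 + 1) • G (r.1, r.2 + 1) + (a + b - c) • G r)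
      = ⇑(Sop (W₃ := W₃) d) := rfl
  rw [hlam]
  rw [Nat.cast_smul_eq_nsmul, Module.End.pow_apply, Module.End.pow_apply, mul_smul]
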